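/- For all x > 0 and all 0 < α < 1/2, Φ(x − z_{2α}) > Φ(x − z_α) + Φ(−x − z_α). -/

import Mathlib

open Real MeasureTheory Set

/-- Standard normal probability density function. -/
noncomputable def stdPhi (x : ℝ) : ℝ := (Real.sqrt (2 * Real.pi))⁻¹ * Real.exp (-x ^ 2 / 2)

/-- Standard normal cumulative distribution function. -/
noncomputable def stdPhiCDF (x : ℝ) : ℝ := ∫ t in Set.Iic x, stdPhi t

open Filter Topology

lemma stdPhi_pos (x : ℝ) : 0 < stdPhi x := by
  unfold stdPhi
  positivity

lemma stdPhi_neg (x : ℝ) : stdPhi (-x) = stdPhi x := by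
  unfold stdPhi; rw [neg_pow]; ring_nf

lemma stdPhi_continuous : Continuous stdPhi := by
  unfold stdPhi
  fun_prop

lemma stdPhi_integrable : Integrable stdPhi := by
  have h : Integrable (fun x : ℝ => Real.exp (-(1/2) * x ^ 2)) :=
    integrable_exp_neg_mul_sq (by norm_num)
  have := h.const_mul (Real.sqrt (2 * Real.pi))⁻¹
  convert this using 2 with x
  unfold stdPhi
  ring_nf

lemma integral_stdPhi : ∫ x, stdPhi x = 1 := by
  unfold stdPhi
  rw [MeasureTheory.integral_const_mul]
  have : ∀ x : ℝ, Real.exp (-x ^ 2 / 2) = Real.exp (-(1/2) * x ^ 2) := by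
    intro x; ring_nf
  simp_rw [this, integral_gaussian]
  rw [inv_mul_eq_one₀ (by positivity)]
  congr 1
  rw [div_div_eq_mul_div, div_one, mul_comm]

lemma stdPhiCDF_eq (x : ℝ) :
    stdPhiCDF x = stdPhiCDF 0 + ∫ t in (0:ℝ)..x, stdPhi t := by
  unfold stdPhiCDF
  rw [← intervalIntegral.integral_Iic_sub_Iic (stdPhi_integrable.integrableOn)
    (stdPhi_integrable.integrableOn)]
  ring

lemma stdPhiCDF_hasDerivAt (x : ℝ) : HasDerivAt stdPhiCDF (stdPhi x) x := by
  have h : ∀ y, stdPhiCDF y = stdPhiCDF 0 + ∫ t in (0:ℝ)..y, stdPhi t := stdPhiCDF_eq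
  have hd : HasDerivAt (fun y => ∫ t in (0:ℝ)..y, stdPhi t) (stdPhi x) x :=
    intervalIntegral.integral_hasDerivAt_right
      (stdPhi_integrable.intervalIntegrable)
      (stdPhi_continuous.stronglyMeasurable.stronglyMeasurableAtFilter)
      (stdPhi_continuous.continuousAt)
  have := (hd.const_add (stdPhiCDF 0))
  simpa [← h] using this

lemma stdPhiCDF_continuous : Continuous stdPhiCDF :=
  continuous_iff_continuousAt.2 fun x => (stdPhiCDF_hasDerivAt x).continuousAt

lemma stdPhiCDF_strictMono : StrictMono stdPhiCDF :=
  strictMono_of_deriv_pos fun x => by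
    rw [(stdPhiCDF_hasDerivAt x).deriv]; exact stdPhi_pos x

lemma stdPhiCDF_neg (x : ℝ) : stdPhiCDF (-x) = 1 - stdPhiCDF x := by
  have h1 : stdPhiCDF x = ∫ t in Set.Ioi (-x), stdPhi t := by
    rw [← integral_comp_neg_Iic]
    simp_rw [stdPhi_neg]
    rfl
  have h2 : stdPhiCDF (-x) + stdPhiCDF x = 1 := by
    rw [h1]
    unfold stdPhiCDF
    rw [intervalIntegral.integral_Iic_add_Ioi stdPhi_integrable.integrableOn
      stdPhi_integrable.integrableOn, integral_stdPhi]
  linarith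

lemma stdPhiCDF_tendsto_atTop : Tendsto stdPhiCDF atTop (𝓝 1) := by
  have h := MeasureTheory.tendsto_setIntegral_of_monotone (μ := (volume : Measure ℝ))
    (f := stdPhi) (s := fun r : ℝ => Iic r)
    (fun r => measurableSet_Iic) (fun r s hrs => Iic_subset_Iic.2 hrs) ?_
  · have hu : ⋃ r : ℝ, Iic r = univ := iUnion_Iic
    rw [hu] at h
    simp only [Measure.restrict_univ, integral_stdPhi] at h
    exact h
  · rw [iUnion_Iic]
    exact stdPhi_integrable.integrableOn

lemma stdPhiCDF_tendsto_atBot : Tendsto stdPhiCDF atBot (𝓝 0) := by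
  have h : Tendsto (fun x : ℝ => 1 - stdPhiCDF (-x)) atBot (𝓝 0) := by
    have := (stdPhiCDF_tendsto_atTop.comp (tendsto_neg_atBot_atTop)).const_sub 1
    simpa using this
  refine h.congr fun x => ?_
  rw [stdPhiCDF_neg]; ring

theorem key_inequality
    (α : ℝ) (hα0 : 0 < α) (hα1 : α < 1 / 2)
    (za zb : ℝ) (hza : 1 - stdPhiCDF za = α) (hzb : 1 - stdPhiCDF zb = 2 * α)
    (x : ℝ) (hx : 0 < x) :
    stdPhiCDF (x - zb) > stdPhiCDF (x - za) + stdPhiCDF (-x - za) := by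
  have hΦa : stdPhiCDF za = 1 - α := by linarith
  have hΦb : stdPhiCDF zb = 1 - 2 * α := by linarith
  have hΦ0 : stdPhiCDF 0 = 1 / 2 := by
    have h := stdPhiCDF_neg 0
    rw [neg_zero] at h
    linarith
  have hba : zb < za := by
    have : stdPhiCDF zb < stdPhiCDF za := by rw [hΦa, hΦb]; linarith
    exact stdPhiCDF_strictMono.lt_iff_lt.1 this
  have ha0 : 0 < za := by
    have : stdPhiCDF 0 < stdPhiCDF za := by rw [hΦa, hΦ0]; linarith
    exact stdPhiCDF_strictMono.lt_iff_lt.1 this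
  set G : ℝ → ℝ := fun y => stdPhiCDF (y - zb) - stdPhiCDF (y - za) - stdPhiCDF (-y - za)
    with hGdef
  set G' : ℝ → ℝ := fun y => stdPhi (y - zb) - stdPhi (y - za) + stdPhi (y + za) with hG'def
  set ψ : ℝ → ℝ := fun y =>
    Real.exp ((za - zb) * y - za ^ 2 / 2) - Real.exp (-(za + zb) * y - za ^ 2 / 2)
      - Real.exp (-zb ^ 2 / 2) with hψdef
  -- derivative of G
  have hG' : ∀ y, HasDerivAt G (G' y) y := by
    intro y
    have h1 : HasDerivAt (fun y => stdPhiCDF (y - zb)) (stdPhi (y - zb) * 1) y :=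
      by have := (stdPhiCDF_hasDerivAt (y - zb)).comp y ((hasDerivAt_id y).sub_const zb); exact this
    have h2 : HasDerivAt (fun y => stdPhiCDF (y - za)) (stdPhi (y - za) * 1) y :=
      by have := (stdPhiCDF_hasDerivAt (y - za)).comp y ((hasDerivAt_id y).sub_const za); exact this
    have h3 : HasDerivAt (fun y => stdPhiCDF (-y - za)) (stdPhi (-y - za) * (-1)) y :=
      by have := (stdPhiCDF_hasDerivAt (-y - za)).comp y (((hasDerivAt_id y).neg).sub_const za); exact this
    have := (h1.sub h2).sub h3
    have heven : stdPhi (-y - za) = stdPhi (y + za) := by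
      rw [show -y - za = -(y + za) by ring, stdPhi_neg]
    simp only [heven] at this
    refine this.congr_deriv ?_
    simp only [hG'def]; ring
  have derivG : ∀ y, deriv G y = G' y := fun y => (hG' y).deriv
  have hGcont : Continuous G := by
    exact ((stdPhiCDF_continuous.comp (continuous_id.sub continuous_const)).sub
      (stdPhiCDF_continuous.comp (continuous_id.sub continuous_const))).sub
      (stdPhiCDF_continuous.comp (continuous_neg.sub continuous_const))
  -- sign identity
  have hsign : ∀ y, G' y =
      (Real.sqrt (2 * Real.pi))⁻¹ * Real.exp (-y ^ 2 / 2 + zb * y) * (-ψ y) := by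
    intro y
    have e1 : Real.exp (-(y - zb) ^ 2 / 2)
        = Real.exp (-y ^ 2 / 2 + zb * y) * Real.exp (-zb ^ 2 / 2) := by
      rw [← Real.exp_add]; congr 1; ring
    have e2 : Real.exp (-(y - za) ^ 2 / 2)
        = Real.exp (-y ^ 2 / 2 + zb * y) * Real.exp ((za - zb) * y - za ^ 2 / 2) := by
      rw [← Real.exp_add]; congr 1; ring
    have e3 : Real.exp (-(y + za) ^ 2 / 2)
        = Real.exp (-y ^ 2 / 2 + zb * y) * Real.exp (-(za + zb) * y - za ^ 2 / 2) := by
      rw [← Real.exp_add]; congr 1; ring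
    simp only [hG'def, hψdef, stdPhi, e1, e2, e3]
    ring
  have hG'pos : ∀ y, ψ y < 0 → 0 < G' y := by
    intro y hy
    rw [hsign y]
    have h1 : (0:ℝ) < (Real.sqrt (2 * Real.pi))⁻¹ := by positivity
    have h2 : (0:ℝ) < Real.exp (-y ^ 2 / 2 + zb * y) := Real.exp_pos _
    exact mul_pos (mul_pos h1 h2) (by linarith)
  have hG'neg : ∀ y, 0 < ψ y → G' y < 0 := by
    intro y hy
    rw [hsign y]
    have h1 : (0:ℝ) < (Real.sqrt (2 * Real.pi))⁻¹ := by positivity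
    have h2 : (0:ℝ) < Real.exp (-y ^ 2 / 2 + zb * y) := Real.exp_pos _
    exact mul_neg_of_pos_of_neg (mul_pos h1 h2) (by linarith)
  -- ψ strictly monotone on [0, ∞)
  have hψcont : Continuous ψ := by
    simp only [hψdef]; fun_prop
  have hψderiv : ∀ y, HasDerivAt ψ
      ((za - zb) * Real.exp ((za - zb) * y - za ^ 2 / 2)
        + (za + zb) * Real.exp (-(za + zb) * y - za ^ 2 / 2)) y := by
    intro y
    have d1 : HasDerivAt (fun y => Real.exp ((za - zb) * y - za ^ 2 / 2))
        (Real.exp ((za - zb) * y - za ^ 2 / 2) * (za - zb)) y := by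
      exact (((hasDerivAt_id y).const_mul (za - zb)).sub_const (za ^ 2 / 2)).exp.congr_deriv
        (by simp only [id_eq]; ring)
    have d2 : HasDerivAt (fun y => Real.exp (-(za + zb) * y - za ^ 2 / 2))
        (Real.exp (-(za + zb) * y - za ^ 2 / 2) * (-(za + zb))) y := by
      exact (((hasDerivAt_id y).const_mul (-(za + zb))).sub_const (za ^ 2 / 2)).exp.congr_deriv
        (by simp only [id_eq]; ring)
    have := (d1.sub d2).sub_const (Real.exp (-zb ^ 2 / 2))
    refine this.congr_deriv ?_
    ring
  have hψmono : StrictMonoOn ψ (Ici 0) := by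
    apply strictMonoOn_of_deriv_pos (convex_Ici 0) hψcont.continuousOn
    intro y hy
    rw [interior_Ici] at hy
    rw [(hψderiv y).deriv]
    set A := Real.exp ((za - zb) * y - za ^ 2 / 2) with hA
    set B := Real.exp (-(za + zb) * y - za ^ 2 / 2) with hB
    have hBpos : 0 < B := Real.exp_pos _
    have hy' : (0:ℝ) < y := hy
    have hAB : B < A := by
      apply Real.exp_lt_exp.2
      nlinarith [mul_pos ha0 hy']
    nlinarith [mul_pos ha0 hBpos, mul_lt_mul_of_pos_left hAB (sub_pos.2 hba)]
  have hψ0 : ψ 0 < 0 := by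
    have h0 : ψ 0 = -Real.exp (-zb ^ 2 / 2) := by
      simp [hψdef]
    rw [h0]
    linarith [Real.exp_pos (-zb ^ 2 / 2)]
  -- G 0 = 0 and G → 0 at +∞
  have hG0 : G 0 = 0 := by
    simp only [hGdef, zero_sub, neg_zero]
    rw [stdPhiCDF_neg, stdPhiCDF_neg, hΦa, hΦb]
    ring
  have hGtop : Tendsto G atTop (𝓝 0) := by
    have t1 : Tendsto (fun y : ℝ => stdPhiCDF (y - zb)) atTop (𝓝 1) :=
      stdPhiCDF_tendsto_atTop.comp (tendsto_atTop_add_const_right atTop (-zb) tendsto_id)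
    have t2 : Tendsto (fun y : ℝ => stdPhiCDF (y - za)) atTop (𝓝 1) :=
      stdPhiCDF_tendsto_atTop.comp (tendsto_atTop_add_const_right atTop (-za) tendsto_id)
    have t3 : Tendsto (fun y : ℝ => stdPhiCDF (-y - za)) atTop (𝓝 0) :=
      stdPhiCDF_tendsto_atBot.comp
        (tendsto_atBot_add_const_right atTop (-za) tendsto_neg_atTop_atBot)
    have := (t1.sub t2).sub t3
    simpa using this
  -- main claim: G x > 0
  have hGx : 0 < G x := by
    set S : Set ℝ := {y : ℝ | 0 ≤ y ∧ 0 ≤ ψ y} with hSdef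
    by_cases hS : S.Nonempty
    · have hScl : IsClosed S := by
        have : S = Ici 0 ∩ ψ ⁻¹' (Ici 0) := by
          ext y; simp [hSdef]
        rw [this]
        exact isClosed_Ici.inter (isClosed_Ici.preimage hψcont)
      have hbdd : BddBelow S := ⟨0, fun y hy => hy.1⟩
      set x₀ := sInf S with hx₀def
      have hmem : x₀ ∈ S := hScl.csInf_mem hS hbdd
      have hx₀0 : 0 ≤ x₀ := hmem.1
      have hψx₀ : 0 ≤ ψ x₀ := hmem.2
      have hlt : ∀ y, 0 ≤ y → y < x₀ → ψ y < 0 := by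
        intro y hy hylt
        by_contra h
        push_neg at h
        exact absurd (csInf_le hbdd ⟨hy, h⟩) (not_le.2 hylt)
      have hmono : StrictMonoOn G (Icc 0 x₀) := by
        apply strictMonoOn_of_deriv_pos (convex_Icc 0 x₀) hGcont.continuousOn
        intro y hy
        rw [interior_Icc] at hy
        rw [derivG]
        exact hG'pos y (hlt y hy.1.le hy.2)
      have hanti : StrictAntiOn G (Ici x₀) := by
        apply strictAntiOn_of_deriv_neg (convex_Ici x₀) hGcont.continuousOn
        intro y hy
        rw [interior_Ici] at hy
        rw [derivG]
        exact hG'neg y (lt_of_le_of_lt hψx₀ (hψmono hx₀0 (hx₀0.trans hy.le) hy))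
      rcases le_or_gt x x₀ with h | h
      · have := hmono (Set.mem_Icc.2 ⟨le_rfl, hx₀0⟩) (Set.mem_Icc.2 ⟨hx.le, h⟩) hx
        linarith [hG0]
      · have hx1le : G (x + 1) ≥ 0 := by
          apply le_of_tendsto hGtop
          filter_upwards [eventually_ge_atTop (x + 1)] with z hz
          rcases eq_or_lt_of_le hz with rfl | hz'
          · exact le_rfl
          · exact (hanti (Set.mem_Ici.2 (by linarith : x₀ ≤ x + 1))
              (Set.mem_Ici.2 (by linarith : x₀ ≤ z)) hz').le
        have hx1lt : G (x + 1) < G x :=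
          hanti (Set.mem_Ici.2 h.le) (Set.mem_Ici.2 (by linarith)) (lt_add_one x)
        linarith
    · have hneg : ∀ y, 0 ≤ y → ψ y < 0 := by
        intro y hy
        by_contra h
        push_neg at h
        exact hS ⟨y, hy, h⟩
      have hmono : StrictMonoOn G (Ici 0) := by
        apply strictMonoOn_of_deriv_pos (convex_Ici 0) hGcont.continuousOn
        intro y hy
        rw [interior_Ici] at hy
        rw [derivG]
        exact hG'pos y (hneg y hy.le)
      have := hmono (Set.mem_Ici.2 le_rfl) (Set.mem_Ici.2 hx.le) hx
      linarith [hG0]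
  simp only [hGdef] at hGx
  linarith
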